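/- For positive integers k and n with 2k ≤ n, the number of non-empty subsets of [n] that are unions of at most k intervals equals C(n+1,2) + C(n+1,4) + ... + C(n+1,2k), which equals C(n,1) + C(n,2) + ... + C(n,2k). -/

import Mathlib

/-- `S` is a union of at most `j` intervals in `[n] = Fin n`. -/
def IsUnionOfIntervals (n j : ℕ) (S : Finset (Fin n)) : Prop :=
  ∃ a b : Fin j → Fin n, S = Finset.univ.sup fun i => Finset.Icc (a i) (b i)

namespace Stmt7

variable {n : ℕ}

/-- shifted characteristic function of `S`: `chi n S m = true` iff `m-1 ∈ S` and `1 ≤ m ≤ n`. -/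
def chi (n : ℕ) (S : Finset (Fin n)) (m : ℕ) : Bool :=
  decide (∃ x ∈ S, x.val + 1 = m)

lemma chi_zero (S : Finset (Fin n)) : chi n S 0 = false := by
  simp [chi]

lemma chi_gt (S : Finset (Fin n)) {m : ℕ} (h : n < m) : chi n S m = false := by
  simp only [chi, decide_eq_false_iff_not]
  rintro ⟨x, _, hxm⟩
  have := x.isLt
  omega

lemma chi_succ (S : Finset (Fin n)) (x : Fin n) : chi n S (x.val + 1) = decide (x ∈ S) := by
  simp only [chi, decide_eq_decide]
  constructor
  · rintro ⟨y, hy, hyx⟩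
    have : y = x := Fin.ext (by omega)
    rwa [← this]
  · intro hx
    exact ⟨x, hx, rfl⟩

lemma parity_changes (f : ℕ → Bool) (x : ℕ) :
    Odd (((Finset.range x).filter fun i => f i ≠ f (i + 1)).card) ↔ f x ≠ f 0 := by
  induction x with
  | zero => simp
  | succ x ih =>
    rw [Finset.range_add_one, Finset.filter_insert]
    by_cases h : f x ≠ f (x + 1)
    · rw [if_pos h, Finset.card_insert_of_notMem (by simp)]
      rw [Nat.odd_add_one, ih]
      revert h
      cases f x <;> cases f (x + 1) <;> cases f 0 <;> simp
    · rw [if_neg h, ih]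
      revert h
      cases f x <;> cases f (x + 1) <;> cases f 0 <;> simp

/-- The boundary set of `S`, as a subset of `Fin (n+1)`. -/
def bSet (n : ℕ) (S : Finset (Fin n)) : Finset (Fin (n + 1)) :=
  Finset.univ.filter fun i => chi n S i.val ≠ chi n S (i.val + 1)

lemma mem_bSet {S : Finset (Fin n)} {i : Fin (n + 1)} :
    i ∈ bSet n S ↔ chi n S i.val ≠ chi n S (i.val + 1) := by
  simp [bSet]

lemma card_bSet_filter (S : Finset (Fin n)) (x : ℕ) (hx : x ≤ n) :
    ((bSet n S).filter fun i => i.val ≤ x).card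
      = ((Finset.range (x + 1)).filter fun i => chi n S i ≠ chi n S (i + 1)).card := by
  apply Finset.card_bij (fun i _ => i.val)
  · intro i hi
    simp only [Finset.mem_filter, mem_bSet] at hi
    obtain ⟨hb, hle⟩ := hi
    simp only [Finset.mem_filter, Finset.mem_range]
    exact ⟨by omega, hb⟩
  · intro i _ j _ h
    exact Fin.ext h
  · intro m hm
    simp only [Finset.mem_filter, Finset.mem_range] at hm
    refine ⟨⟨m, by omega⟩, ?_, rfl⟩
    simp only [Finset.mem_filter, mem_bSet]
    exact ⟨hm.2, by omega⟩

lemma mem_iff_odd (S : Finset (Fin n)) (x : Fin n) :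
    x ∈ S ↔ Odd (((bSet n S).filter fun i => i.val ≤ x.val).card) := by
  rw [card_bSet_filter S x.val (by omega), parity_changes, chi_zero, chi_succ]
  simp

lemma even_card_bSet (S : Finset (Fin n)) : Even (bSet n S).card := by
  have h1 : (bSet n S).filter (fun i => i.val ≤ n) = bSet n S := by
    apply Finset.filter_true_of_mem; intro i _; omega
  have h2 := card_bSet_filter S n le_rfl
  rw [h1] at h2
  rw [← Nat.not_odd_iff_even, h2, parity_changes, chi_zero, chi_gt S (by omega)]
  simp

lemma bSet_nonempty (S : Finset (Fin n)) (hS : S.Nonempty) : (bSet n S).Nonempty := by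
  obtain ⟨x, hx⟩ := hS
  have h := (mem_iff_odd S x).1 hx
  have hpos : 0 < ((bSet n S).filter fun i => i.val ≤ x.val).card := by
    rcases h with ⟨r, hr⟩; omega
  obtain ⟨i, hi⟩ := Finset.card_pos.mp hpos
  exact ⟨i, (Finset.mem_filter.mp hi).1⟩

lemma card_bSet_le (S : Finset (Fin n)) (k : ℕ) (hk : 0 < k)
    (h : IsUnionOfIntervals n k S) : (bSet n S).card ≤ 2 * k := by
  classical
  obtain ⟨a, b, hab⟩ := h
  have hmem : ∀ x : Fin n, x ∈ S ↔ ∃ t, a t ≤ x ∧ x ≤ b t := by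
    intro x
    rw [hab, Finset.mem_sup]
    simp [Finset.mem_Icc]
  set P : Fin (n + 1) → Fin k → Prop :=
    fun i t => if chi n S i.val = true then (b t).val + 1 = i.val else (a t).val = i.val with hP
  have key : ∀ i ∈ bSet n S, ∃ t, P i t := by
    intro i hi
    rw [mem_bSet] at hi
    by_cases hc : chi n S i.val = true
    · have hc' : chi n S (i.val + 1) = false := by
        cases h' : chi n S (i.val + 1)
        · rfl
        · exact absurd (hc.trans h'.symm) hi
      obtain ⟨x, hx, hxi⟩ : ∃ x ∈ S, x.val + 1 = i.val := by
        have := of_decide_eq_true hc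
        exact this
      obtain ⟨t, ht1, ht2⟩ := (hmem x).1 hx
      refine ⟨t, ?_⟩
      rw [hP]
      simp only [if_pos hc]
      -- claim (b t).val = x.val
      by_contra hne
      have hlt : x.val < (b t).val := by
        have := ht2; rw [Fin.le_def] at this; omega
      have hy : x.val + 1 < n := by have := (b t).isLt; omega
      have hymem : (⟨x.val + 1, by omega⟩ : Fin n) ∈ S := by
        rw [hmem]
        refine ⟨t, ?_, ?_⟩
        · rw [Fin.le_def] at ht1 ⊢; simp; omega
        · rw [Fin.le_def] at ht2 ⊢; simp; omega
      have : chi n S (i.val + 1) = true := by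
        simp only [chi, decide_eq_true_eq]
        exact ⟨⟨x.val + 1, by omega⟩, hymem, by simp; omega⟩
      rw [this] at hc'; exact absurd hc' (by simp)
    · have hc1 : chi n S (i.val + 1) = true := by
        cases h' : chi n S (i.val + 1)
        · exact absurd ((Bool.eq_false_iff.mpr hc).trans h'.symm) hi
        · rfl
      obtain ⟨x, hx, hxi⟩ : ∃ x ∈ S, x.val + 1 = i.val + 1 := of_decide_eq_true hc1
      have hxival : x.val = i.val := by omega
      obtain ⟨t, ht1, ht2⟩ := (hmem x).1 hx
      refine ⟨t, ?_⟩
      rw [hP]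
      simp only [if_neg hc]
      -- claim (a t).val = i.val
      by_contra hne
      have hlt : (a t).val < i.val := by
        have := ht1; rw [Fin.le_def] at this; omega
      have hy : i.val - 1 < n := by have := x.isLt; omega
      have hymem : (⟨i.val - 1, hy⟩ : Fin n) ∈ S := by
        rw [hmem]
        refine ⟨t, ?_, ?_⟩
        · rw [Fin.le_def] at ht1 ⊢; simp; omega
        · rw [Fin.le_def] at ht2 ⊢; simp; omega
      have : chi n S i.val = true := by
        simp only [chi, decide_eq_true_eq]
        exact ⟨⟨i.val - 1, hy⟩, hymem, by simp; omega⟩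
      exact hc this
  have hcard : (bSet n S).card ≤ (Finset.univ : Finset (Fin k × Bool)).card := by
    apply Finset.card_le_card_of_injOn
      (fun i => if h : ∃ t, P i t then (h.choose, chi n S i.val) else (⟨0, hk⟩, false))
    · intro _ _; exact Finset.mem_univ _
    · intro i hi j hj hij
      have hi' := key i hi
      have hj' := key j hj
      simp only [dif_pos hi', dif_pos hj', Prod.mk.injEq] at hij
      obtain ⟨h1, h2⟩ := hij
      have hpi := hi'.choose_spec
      have hpj := hj'.choose_spec
      rw [h1] at hpi
      have hpi2 : if chi n S i.val = true then (b hj'.choose).val + 1 = i.val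
          else (a hj'.choose).val = i.val := hpi
      have hpj2 : if chi n S j.val = true then (b hj'.choose).val + 1 = j.val
          else (a hj'.choose).val = j.val := hpj
      apply Fin.ext
      by_cases hc : chi n S i.val = true
      · rw [if_pos hc] at hpi2
        rw [if_pos (h2.symm.trans hc)] at hpj2
        omega
      · rw [if_neg hc] at hpi2
        rw [if_neg (fun hh => hc (h2.trans hh))] at hpj2
        omega
  calc (bSet n S).card ≤ (Finset.univ : Finset (Fin k × Bool)).card := hcard
    _ = 2 * k := by simp [Finset.card_univ]; ring

lemma lowerset_mem_iff {N : ℕ} (P : Fin N → Prop) [DecidablePred P]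
    (hP : ∀ m m' : Fin N, m' ≤ m → P m → P m') (m : Fin N) :
    P m ↔ m.val < (Finset.univ.filter P).card := by
  constructor
  · intro hm
    have hsub : Finset.Iic m ⊆ Finset.univ.filter P := by
      intro t ht
      rw [Finset.mem_Iic] at ht
      exact Finset.mem_filter.mpr ⟨Finset.mem_univ _, hP m t ht hm⟩
    have := Finset.card_le_card hsub
    rw [Fin.card_Iic] at this
    omega
  · intro hm
    by_contra hPm
    have hsub : Finset.univ.filter P ⊆ Finset.Iio m := by
      intro t ht
      rw [Finset.mem_Iio]
      rcases lt_or_ge t m with h | h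
      · exact h
      · exact absurd (hP t m h (Finset.mem_filter.mp ht).2) hPm
    have := Finset.card_le_card hsub
    rw [Fin.card_Iio] at this
    omega

lemma card_filter_le_eq {c : ℕ} (T : Finset (Fin (n + 1))) (hc : T.card = c) (x : ℕ) :
    (T.filter fun t => t.val ≤ x).card
      = (Finset.univ.filter fun m : Fin c => ((T.orderIsoOfFin hc m : Fin (n + 1))).val ≤ x).card := by
  symm
  apply Finset.card_bij (fun m _ => (T.orderIsoOfFin hc m : Fin (n + 1)))
  · intro m hm
    simp only [Finset.mem_filter, Finset.mem_univ, true_and] at hm ⊢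
    exact ⟨(T.orderIsoOfFin hc m).2, hm⟩
  · intro m _ m' _ h
    exact (T.orderIsoOfFin hc).injective (Subtype.ext h)
  · intro t ht
    simp only [Finset.mem_filter] at ht
    refine ⟨(T.orderIsoOfFin hc).symm ⟨t, ht.1⟩, ?_, ?_⟩
    · simp only [Finset.mem_filter, Finset.mem_univ, true_and, OrderIso.apply_symm_apply]
      exact ht.2
    · simp

lemma isUnion_of_card (S : Finset (Fin n)) (k : ℕ) (hk : 0 < k) (hS : S.Nonempty)
    (hcard : (bSet n S).card ≤ 2 * k) : IsUnionOfIntervals n k S := by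
  classical
  set T := bSet n S with hT
  set c := T.card with hc
  have hceven : Even c := even_card_bSet S
  have hcpos : 0 < c := Finset.card_pos.mpr (bSet_nonempty S hS)
  have hc2 : 2 ≤ c := by obtain ⟨r, hr⟩ := hceven; omega
  have hn : 0 < n := by obtain ⟨x, _⟩ := hS; have := x.isLt; omega
  let f : Fin c ≃o T := T.orderIsoOfFin hc.symm
  set g : Fin c → ℕ := fun m => ((f m : Fin (n + 1)) : ℕ) with hg
  have gmono : StrictMono g := by
    intro m m' h
    have := f.strictMono h
    exact this
  have glt : ∀ m : Fin c, g m ≤ n := fun m => by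
    show ((f m : Fin (n + 1)) : ℕ) ≤ n
    have := (f m : Fin (n + 1)).isLt; omega
  have hidx : ∀ i : Fin k, min (2 * i.val) (c - 2) + 1 < c := by
    intro i
    have : min (2 * i.val) (c - 2) ≤ c - 2 := min_le_right _ _
    omega
  have hidx0 : ∀ i : Fin k, min (2 * i.val) (c - 2) < c := fun i => by have := hidx i; omega
  set a : Fin k → Fin n := fun i =>
    ⟨g ⟨min (2 * i.val) (c - 2), hidx0 i⟩, by
      have h1 := gmono (show (⟨min (2 * i.val) (c - 2), hidx0 i⟩ : Fin c)
        < ⟨min (2 * i.val) (c - 2) + 1, hidx i⟩ from by simp [Fin.lt_def])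
      have h2 := glt ⟨min (2 * i.val) (c - 2) + 1, hidx i⟩
      omega⟩ with ha
  set b : Fin k → Fin n := fun i =>
    ⟨g ⟨min (2 * i.val) (c - 2) + 1, hidx i⟩ - 1, by
      have h2 := glt ⟨min (2 * i.val) (c - 2) + 1, hidx i⟩
      omega⟩ with hb
  refine ⟨a, b, ?_⟩
  ext x
  rw [Finset.mem_sup]
  set cx := (T.filter fun t => t.val ≤ x.val).card with hcx
  have hxmem : x ∈ S ↔ Odd cx := mem_iff_odd S x
  have htrans : cx = (Finset.univ.filter fun m : Fin c => g m ≤ x.val).card :=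
    card_filter_le_eq T hc.symm x.val
  have hlow : ∀ m : Fin c, g m ≤ x.val ↔ m.val < cx := by
    intro m
    rw [htrans]
    exact lowerset_mem_iff (fun m : Fin c => g m ≤ x.val)
      (fun m m' hle hm => le_trans (gmono.monotone hle) hm) m
  have hcxle : cx ≤ c := by rw [hcx, hc]; exact Finset.card_filter_le _ _
  have hmm : ∀ i : Fin k, (x ∈ Finset.Icc (a i) (b i)
      ↔ cx = min (2 * i.val) (c - 2) + 1) := by
    intro i
    rw [Finset.mem_Icc, ha, hb, Fin.le_def, Fin.le_def]
    simp only
    have hglt : g ⟨min (2 * i.val) (c - 2), hidx0 i⟩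
        < g ⟨min (2 * i.val) (c - 2) + 1, hidx i⟩ := by
      apply gmono; simp [Fin.lt_def]
    have h1 := hlow ⟨min (2 * i.val) (c - 2), hidx0 i⟩
    have h2 := hlow ⟨min (2 * i.val) (c - 2) + 1, hidx i⟩
    simp only at h1 h2
    constructor
    · rintro ⟨hax, hxb⟩
      have hb1 : ¬ (g ⟨min (2 * i.val) (c - 2) + 1, hidx i⟩ ≤ x.val) := by omega
      rw [h2] at hb1
      rw [h1] at hax
      omega
    · intro hcxeq
      have hl : min (2 * i.val) (c - 2) < cx := by omega
      have hr : ¬ (min (2 * i.val) (c - 2) + 1 < cx) := by omega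
      rw [← h1] at hl
      rw [← h2] at hr
      omega
  constructor
  · intro hx
    obtain ⟨r, hr⟩ := hxmem.1 hx
    have hrk : r < k := by
      obtain ⟨s, hs⟩ := hceven
      have h2k : c ≤ 2 * k := hcard
      omega
    refine ⟨⟨r, hrk⟩, Finset.mem_univ _, ?_⟩
    rw [hmm ⟨r, hrk⟩]
    obtain ⟨s, hs⟩ := hceven
    simp only
    omega
  · rintro ⟨i, _, hx⟩
    rw [hmm i] at hx
    rw [hxmem, hx]
    obtain ⟨s, hs⟩ := hceven
    rcases Nat.le_total (2 * i.val) (c - 2) with h | h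
    · rw [min_eq_left h]; exact ⟨i.val, by omega⟩
    · rw [min_eq_right h]; exact ⟨s - 1, by omega⟩

/-- Reconstruction of a set from a boundary set. -/
def recon (n : ℕ) (T : Finset (Fin (n + 1))) : Finset (Fin n) :=
  Finset.univ.filter fun x => Odd ((T.filter fun t => t.val ≤ x.val).card)

lemma chi_recon (T : Finset (Fin (n + 1))) (heven : Even T.card) (m : ℕ) (hm : m ≤ n + 1) :
    chi n (recon n T) m = decide (Odd ((T.filter fun t => t.val < m).card)) := by
  rcases m with _ | m'
  · rw [chi_zero]
    have : (T.filter fun t => t.val < 0) = ∅ := by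
      apply Finset.filter_false_of_mem; intro t _; omega
    simp [this]
  · by_cases h : m' < n
    · rw [show m' + 1 = (⟨m', h⟩ : Fin n).val + 1 from rfl, chi_succ]
      have hmem : (⟨m', h⟩ : Fin n) ∈ recon n T
          ↔ Odd ((T.filter fun t => t.val ≤ m').card) := by
        simp [recon]
      have hfeq : (T.filter fun t => t.val ≤ m') = (T.filter fun t => t.val < m' + 1) := by
        apply Finset.filter_congr; intro t _; omega
      simp only [decide_eq_decide]
      rw [hmem, hfeq]
    · have hm' : m' = n := by omega
      rw [hm']
      rw [chi_gt (recon n T) (show n < n + 1 by omega)]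
      have hall : (T.filter fun t => t.val < n + 1) = T := by
        apply Finset.filter_true_of_mem; intro t _; exact t.isLt
      rw [hall]
      rw [← Nat.not_odd_iff_even] at heven
      simp [heven]

lemma bSet_recon (T : Finset (Fin (n + 1))) (heven : Even T.card) :
    bSet n (recon n T) = T := by
  classical
  ext i
  rw [mem_bSet]
  rw [chi_recon T heven i.val (by omega), chi_recon T heven (i.val + 1) (by omega)]
  have hsplit : (T.filter fun t => t.val < i.val + 1)
      = (T.filter fun t => t.val < i.val) ∪ (T.filter fun t => t = i) := by
    ext t
    simp only [Finset.mem_filter, Finset.mem_union]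
    constructor
    · rintro ⟨ht, hlt⟩
      rcases Nat.lt_or_ge t.val i.val with h | h
      · exact Or.inl ⟨ht, h⟩
      · exact Or.inr ⟨ht, Fin.ext (by omega)⟩
    · rintro (⟨ht, hlt⟩ | ⟨ht, rfl⟩)
      · exact ⟨ht, by omega⟩
      · exact ⟨ht, by omega⟩
  have hdisj : Disjoint (T.filter fun t => t.val < i.val) (T.filter fun t => t = i) := by
    rw [Finset.disjoint_left]
    rintro t ht ht'
    simp only [Finset.mem_filter] at ht ht'
    rw [ht'.2] at ht
    omega
  have hcardsum : (T.filter fun t => t.val < i.val + 1).card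
      = (T.filter fun t => t.val < i.val).card + (T.filter fun t => t = i).card := by
    rw [hsplit, Finset.card_union_of_disjoint hdisj]
  have hsingle : (T.filter fun t => t = i).card = if i ∈ T then 1 else 0 := by
    rw [Finset.filter_eq' T i]
    split <;> simp
  by_cases hiT : i ∈ T
  · rw [hsingle, if_pos hiT] at hcardsum
    simp only [hiT, iff_true]
    intro heq
    rw [decide_eq_decide] at heq
    rw [hcardsum, Nat.odd_add_one] at heq
    tauto
  · have h0 : (T.filter fun t => t = i).card = 0 := by rw [hsingle, if_neg hiT]
    have heq2 : (T.filter fun t => t.val < i.val + 1).card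
        = (T.filter fun t => t.val < i.val).card := by omega
    rw [heq2]
    simp [hiT]

lemma recon_nonempty (T : Finset (Fin (n + 1))) (hne : T.Nonempty) (h2 : 2 ≤ T.card) :
    (recon n T).Nonempty := by
  classical
  set t0 := T.min' hne with ht0
  have hlt : t0 < T.max' hne := T.min'_lt_max'_of_card (by omega)
  have ht0n : t0.val < n := by
    have h1 : (T.max' hne).val ≤ n := by omega
    rw [Fin.lt_def] at hlt
    omega
  refine ⟨⟨t0.val, ht0n⟩, ?_⟩
  simp only [recon, Finset.mem_filter, Finset.mem_univ, true_and]
  have hone : (T.filter fun t => t.val ≤ t0.val) = {t0} := by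
    ext t
    simp only [Finset.mem_filter, Finset.mem_singleton]
    constructor
    · rintro ⟨ht, hle⟩
      have := T.min'_le t ht
      rw [← ht0] at this
      exact le_antisymm (by rw [Fin.le_def]; omega) this |>.symm ▸ rfl
    · rintro rfl
      exact ⟨T.min'_mem hne, le_rfl⟩
  rw [hone]
  simp

lemma sum_choose_eq (n : ℕ) (k : ℕ) :
    ∑ j ∈ Finset.Icc 1 k, (n + 1).choose (2 * j) = ∑ j ∈ Finset.Icc 1 (2 * k), n.choose j := by
  induction k with
  | zero => simp
  | succ k ih =>
    rw [Finset.sum_Icc_succ_top (by omega : 1 ≤ k + 1), ih]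
    rw [show 2 * (k + 1) = (2 * k + 1) + 1 from by ring]
    rw [Finset.sum_Icc_succ_top (by omega : 1 ≤ (2 * k + 1) + 1),
      Finset.sum_Icc_succ_top (by omega : 1 ≤ 2 * k + 1)]
    rw [Nat.choose_succ_succ n (2 * k + 1)]
    ring

end Stmt7

open Stmt7 in
/-- The number of non-empty subsets of `[n]` that are unions of at most `k`
    intervals equals `∑_{j=1}^{k} C(n+1, 2j) = ∑_{j=1}^{2k} C(n, j)`. -/
theorem stmt_7 (n k : ℕ) (hk : 1 ≤ k) (hkn : 2 * k ≤ n) :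
    Nat.card {S : Finset (Fin n) // S.Nonempty ∧ IsUnionOfIntervals n k S} =
        ∑ j ∈ Finset.Icc 1 k, (n + 1).choose (2 * j) ∧
      ∑ j ∈ Finset.Icc 1 k, (n + 1).choose (2 * j) =
        ∑ j ∈ Finset.Icc 1 (2 * k), n.choose j := by
  classical
  refine ⟨?_, sum_choose_eq n k⟩
  have hA : Nat.card {S : Finset (Fin n) // S.Nonempty ∧ IsUnionOfIntervals n k S}
      = ((Finset.univ : Finset (Finset (Fin n))).filter
          fun S => S.Nonempty ∧ IsUnionOfIntervals n k S).card := by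
    rw [Nat.card_eq_fintype_card, Fintype.card_subtype]
  rw [hA]
  set E := ((Finset.univ : Finset (Finset (Fin (n + 1)))).filter
      fun T => T.Nonempty ∧ Even T.card ∧ T.card ≤ 2 * k) with hE
  have hbij : ((Finset.univ : Finset (Finset (Fin n))).filter
      fun S => S.Nonempty ∧ IsUnionOfIntervals n k S).card = E.card := by
    apply Finset.card_bij (fun S _ => bSet n S)
    · intro S hS
      simp only [Finset.mem_filter, Finset.mem_univ, true_and] at hS
      simp only [hE, Finset.mem_filter, Finset.mem_univ, true_and]
      exact ⟨bSet_nonempty S hS.1, even_card_bSet S, card_bSet_le S k hk hS.2⟩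
    · intro S hS S' hS' h
      ext x
      rw [mem_iff_odd S x, mem_iff_odd S' x, h]
    · intro T hT
      simp only [hE, Finset.mem_filter, Finset.mem_univ, true_and] at hT
      obtain ⟨hTne, hTeven, hTle⟩ := hT
      have h2 : 2 ≤ T.card := by
        obtain ⟨r, hr⟩ := hTeven
        have := Finset.card_pos.mpr hTne
        omega
      have hb := bSet_recon T hTeven
      have hne := recon_nonempty T hTne h2
      refine ⟨recon n T, ?_, hb⟩
      simp only [Finset.mem_filter, Finset.mem_univ, true_and]
      exact ⟨hne, isUnion_of_card (recon n T) k hk hne (by rw [hb]; exact hTle)⟩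
  rw [hbij]
  have hEdecomp : E = (Finset.Icc 1 k).biUnion
      (fun j => Finset.powersetCard (2 * j) Finset.univ) := by
    ext T
    simp only [hE, Finset.mem_filter, Finset.mem_univ, true_and, Finset.mem_biUnion,
      Finset.mem_Icc, Finset.mem_powersetCard]
    constructor
    · rintro ⟨hne, ⟨r, hr⟩, hle⟩
      have hpos := Finset.card_pos.mpr hne
      exact ⟨r, ⟨by omega, by omega⟩, Finset.subset_univ _, by omega⟩
    · rintro ⟨j, ⟨hj1, hjk⟩, _, hcard⟩
      refine ⟨Finset.card_pos.mp (by omega), ⟨j, by omega⟩, by omega⟩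
  rw [hEdecomp, Finset.card_biUnion]
  · apply Finset.sum_congr rfl
    intro j _
    rw [Finset.card_powersetCard, Finset.card_univ, Fintype.card_fin]
  · intro i _ j _ hij
    rw [Function.onFun, Finset.disjoint_left]
    intro T hTi hTj
    rw [Finset.mem_powersetCard] at hTi hTj
    exact hij (by omega)
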